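/- Let v and w be two weight structures on a triangulated category C such that C_{w≤0} ⊆ C_{v≤0} and C_{w≥0} ⊆ C_{v≥0}. Then v = w, i.e., both inclusions are equalities. -/

import Mathlib

open CategoryTheory Category Limits Pretriangulated ZeroObject Opposite

universe v u u₂ v₂

variable (C : Type u) [Category.{v} C] [Preadditive C] [HasZeroObject C]
  [HasShift C ℤ] [∀ n : ℤ, (CategoryTheory.shiftFunctor C n).Additive] [Pretriangulated C]

/-- `X` is a retract (direct summand) of `Y`. -/
def IsRetract {C : Type u} [Category.{v} C] (X Y : C) : Prop :=
  ∃ (s : X ⟶ Y) (r : Y ⟶ X), s ≫ r = 𝟙 X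

/-- A weight structure on a pretriangulated category `C`, in the homological convention:
`le` is the class `C_{w≤0}` and `ge` is the class `C_{w≥0}`. -/
structure WeightStructure where
  le : Set C
  ge : Set C
  le_retract : ∀ ⦃X Y : C⦄, IsRetract X Y → Y ∈ le → X ∈ le
  ge_retract : ∀ ⦃X Y : C⦄, IsRetract X Y → Y ∈ ge → X ∈ ge
  le_shift : ∀ X : C, X ∈ le → X⟦(-1 : ℤ)⟧ ∈ le
  ge_shift : ∀ X : C, X ∈ ge → X⟦(1 : ℤ)⟧ ∈ ge
  orth : ∀ ⦃X Y : C⦄, X ∈ le → Y ∈ ge → ∀ f : X ⟶ Y⟦(1 : ℤ)⟧, f = 0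
  decomp : ∀ M : C, ∃ (L R : C) (f : L ⟶ M) (g : M ⟶ R) (h : R ⟶ L⟦(1 : ℤ)⟧),
    Triangle.mk f g h ∈ (distTriang C) ∧ L ∈ le ∧ R⟦(-1 : ℤ)⟧ ∈ ge

/-- A t-structure on a pretriangulated category `C`, in the homological convention:
`le` is the class `C_{t≤0}` and `ge` is the class `C_{t≥0}`. -/
structure HomTStructure where
  le : Set C
  ge : Set C
  le_iso : ∀ ⦃X Y : C⦄, (X ≅ Y) → Y ∈ le → X ∈ le
  ge_iso : ∀ ⦃X Y : C⦄, (X ≅ Y) → Y ∈ ge → X ∈ ge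
  le_shift : ∀ X : C, X ∈ le → X⟦(-1 : ℤ)⟧ ∈ le
  ge_shift : ∀ X : C, X ∈ ge → X⟦(1 : ℤ)⟧ ∈ ge
  orth : ∀ ⦃X Y : C⦄, X⟦(-1 : ℤ)⟧ ∈ ge → Y ∈ le → ∀ f : X ⟶ Y, f = 0
  decomp : ∀ M : C, ∃ (L R : C) (f : L ⟶ M) (g : M ⟶ R) (h : R ⟶ L⟦(1 : ℤ)⟧),
    Triangle.mk f g h ∈ (distTriang C) ∧ L ∈ ge ∧ R⟦(1 : ℤ)⟧ ∈ le

/-- A contravariant additive functor is cohomological if it sends distinguished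
triangles to exact sequences. -/
def IsCohomological {A : Type u₂} [Category.{v₂} A] [Abelian A]
    (H : Cᵒᵖ ⥤ A) [H.Additive] : Prop :=
  ∀ (T : Triangle C), ∀ hT : T ∈ distTriang C,
    (ShortComplex.mk (H.map T.mor₂.op) (H.map T.mor₁.op) (by
      rw [← H.map_comp, ← op_comp, comp_distTriang_mor_zero₁₂ _ hT, op_zero, H.map_zero])).Exact


lemma isRetract_of_iso {D : Type*} [Category D] {X X' Y : D} (e : X ≅ X')
    (h : IsRetract X' Y) : IsRetract X Y := by
  obtain ⟨s, r, hsr⟩ := h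
  exact ⟨e.hom ≫ s, r ≫ e.inv, by simp [reassoc_of% hsr]⟩

lemma isRetract_shift {D : Type*} [Category D] [HasShift D ℤ] {X Y : D} (n : ℤ)
    (h : IsRetract X Y) : IsRetract (X⟦n⟧) (Y⟦n⟧) := by
  obtain ⟨s, r, hsr⟩ := h
  exact ⟨s⟦n⟧', r⟦n⟧', by rw [← Functor.map_comp, hsr]; simp⟩

/-- A weight structure whose classes are contained in those of another weight structure
coincides with it. -/
theorem weightStructure_unique (w v : WeightStructure C)
    (h1 : w.le ⊆ v.le) (h2 : w.ge ⊆ v.ge) :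
    w.le = v.le ∧ w.ge = v.ge := by
  constructor
  · apply le_antisymm h1
    intro X hX
    obtain ⟨L, R, f, g, h, hT, hL, hR⟩ := w.decomp X
    have hg : g = 0 := by
      have e : R⟦(-1 : ℤ)⟧⟦(1 : ℤ)⟧ ≅ R := (shiftFunctorCompIsoId C (-1) 1 (by ring)).app R
      have h0 : g ≫ e.inv = 0 := v.orth hX (h2 hR) _
      rw [← comp_id g, ← e.inv_hom_id, reassoc_of% h0, zero_comp]
    obtain ⟨s, hs⟩ := Triangle.coyoneda_exact₂ _ hT (𝟙 X) (by simp [hg]; exact comp_zero)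
    exact w.le_retract ⟨s, f, hs.symm⟩ hL
  · apply le_antisymm h2
    intro X hX
    obtain ⟨L, R, f, g, h, hT, hL, hR⟩ := w.decomp (X⟦(1 : ℤ)⟧)
    have hf : f = 0 := v.orth (h1 hL) hX f
    obtain ⟨r, hr⟩ := Triangle.yoneda_exact₂ _ hT (𝟙 _) (by simp [hf]; exact zero_comp)
    have hret : IsRetract (X⟦(1 : ℤ)⟧⟦(-1 : ℤ)⟧) (R⟦(-1 : ℤ)⟧) :=
      isRetract_shift (-1) ⟨g, r, hr.symm⟩
    have e : X ≅ X⟦(1 : ℤ)⟧⟦(-1 : ℤ)⟧ := ((shiftFunctorCompIsoId C 1 (-1) (by ring)).app X).symm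
    exact w.ge_retract (isRetract_of_iso e hret) hR
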